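/- Lemma 1 (limit of ρa at the origin): if (χ, a, f, Q) is a solution of system (10) on (0,∞) satisfying condition (C1), then ε ρ a(ρ) converges as ρ → 0⁺, and its limit equals f(0⁺), the limit of f as ρ → 0⁺ (which exists since Q = df/dρ is bounded). -/

import Mathlib

open Real Filter Topology Set

lemma aux_contOn_inv_sq : ContinuousOn (fun s : ℝ => (s ^ 2)⁻¹) (Ioi (0:ℝ)) := by
  apply ContinuousOn.inv₀ ((continuous_pow 2).continuousOn)
  intro s hs
  exact pow_ne_zero 2 (ne_of_gt hs)

lemma aux_int_inv_sq {x y : ℝ} (hx : 0 < x) (hy : 0 < y) :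
    IntervalIntegrable (fun s : ℝ => (s ^ 2)⁻¹) MeasureTheory.volume x y := by
  apply (aux_contOn_inv_sq.mono ?_).intervalIntegrable
  intro s hs
  exact lt_of_lt_of_le (lt_min hx hy) hs.1

lemma aux_intval_inv_sq {x y : ℝ} (hx : 0 < x) (hy : 0 < y) :
    (∫ s in x..y, (s ^ 2)⁻¹) = x⁻¹ - y⁻¹ := by
  have h : ∀ s ∈ uIcc x y, HasDerivAt (fun t : ℝ => -t⁻¹) ((s ^ 2)⁻¹) s := by
    intro s hs
    have hs0 : s ≠ 0 := ne_of_gt (lt_of_lt_of_le (lt_min hx hy) hs.1)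
    have h1 := (hasDerivAt_inv hs0).neg
    rw [neg_neg] at h1
    exact h1
  rw [intervalIntegral.integral_eq_sub_of_hasDerivAt h (aux_int_inv_sq hx hy)]
  ring

theorem lemma1_limit_rho_a
    (χ a f Q : ℝ → ℝ) (ε : ℝ) (hε : ε = 1 ∨ ε = -1)
    (hχ : ∀ ρ > (0:ℝ), HasDerivAt χ (a ρ + 1 - Real.cos (χ ρ)) ρ)
    (ha : ∀ ρ > (0:ℝ), HasDerivAt a (-ε * f ρ / ρ ^ 2) ρ)
    (hf : ∀ ρ > (0:ℝ), HasDerivAt f (Q ρ) ρ)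
    (hQ : ∀ ρ > (0:ℝ), HasDerivAt Q (-Q ρ * Real.sin (χ ρ)) ρ)
    (hQnn : ∀ ρ > (0:ℝ), 0 ≤ Q ρ)
    -- Condition (C1)
    (hfbdd : ∃ Mf, ∀ ρ > (0:ℝ), |f ρ| ≤ Mf)
    (hQbdd : ∃ MQ, ∀ ρ > (0:ℝ), |Q ρ| ≤ MQ)
    (hflim : ∃ Lf, Tendsto f atTop (𝓝 Lf))
    (hQlim : ∃ LQ, Tendsto Q atTop (𝓝 LQ)) :
    ∃ f0 : ℝ, Tendsto f (𝓝[>] (0:ℝ)) (𝓝 f0) ∧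
      Tendsto (fun ρ => ε * ρ * a ρ) (𝓝[>] (0:ℝ)) (𝓝 f0) := by
  obtain ⟨Mf, hMf⟩ := hfbdd
  have hε2 : ε * ε = 1 := by rcases hε with h | h <;> rw [h] <;> norm_num
  -- f is continuous and monotone on (0,∞), bounded below, so it has a limit at 0⁺
  have hfc : ContinuousOn f (Ioi (0:ℝ)) := fun x hx =>
    (hf x hx).continuousAt.continuousWithinAt
  have hfmono : MonotoneOn f (Ioi (0:ℝ)) := by
    apply monotoneOn_of_hasDerivWithinAt_nonneg (f' := Q) (convex_Ioi 0) hfc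
    · intro x hx
      rw [interior_Ioi] at hx
      exact (hf x hx).hasDerivWithinAt
    · intro x hx
      rw [interior_Ioi] at hx
      exact hQnn x hx
  have hbb : BddBelow (f '' Ioi (0:ℝ)) := by
    refine ⟨-Mf, ?_⟩
    rintro y ⟨x, hx, rfl⟩
    exact neg_le_of_abs_le (hMf x hx)
  set f0 := sInf (f '' Ioi (0:ℝ)) with hf0def
  have hf0 : Tendsto f (𝓝[>] (0:ℝ)) (𝓝 f0) := hfmono.tendsto_nhdsGT hbb
  refine ⟨f0, hf0, ?_⟩
  -- the shifted integrand
  set G : ℝ → ℝ := fun s => (f s - f0) / s ^ 2 with hGdef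
  have hGc : ContinuousOn G (Ioi (0:ℝ)) := by
    apply ContinuousOn.div (hfc.sub continuousOn_const) ((continuous_pow 2).continuousOn)
    intro s hs
    exact pow_ne_zero 2 (ne_of_gt hs)
  have hGint : ∀ x y : ℝ, 0 < x → 0 < y →
      IntervalIntegrable G MeasureTheory.volume x y := by
    intro x y hx hy
    apply (hGc.mono ?_).intervalIntegrable
    intro s hs
    exact lt_of_lt_of_le (lt_min hx hy) hs.1
  set J : ℝ → ℝ := fun x => ∫ s in x..(1:ℝ), G s with hJdef
  -- FTC for a
  have key : ∀ x : ℝ, 0 < x → a 1 - a x = ∫ s in x..(1:ℝ), -ε * f s / s ^ 2 := by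
    intro x hx
    refine (intervalIntegral.integral_eq_sub_of_hasDerivAt ?_ ?_).symm
    · intro s hs
      exact ha s (lt_of_lt_of_le (lt_min hx one_pos) hs.1)
    · apply ContinuousOn.intervalIntegrable
      apply ContinuousOn.mono (s := Ioi (0:ℝ)) ?_ ?_
      · apply ContinuousOn.div (continuousOn_const.mul hfc) ((continuous_pow 2).continuousOn)
        intro s hs
        exact pow_ne_zero 2 (ne_of_gt hs)
      · intro s hs
        exact lt_of_lt_of_le (lt_min hx one_pos) hs.1
  -- representation of ε x a x for x ∈ (0,1)
  have rep : ∀ x : ℝ, 0 < x → ε * x * a x = ε * x * a 1 + x * J x + f0 * (1 - x) := by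
    intro x hx
    have e1 : (∫ s in x..(1:ℝ), -ε * f s / s ^ 2)
        = -ε * ∫ s in x..(1:ℝ), f s / s ^ 2 := by
      rw [← intervalIntegral.integral_const_mul]
      congr 1 with s
      ring
    have e2 : (∫ s in x..(1:ℝ), f s / s ^ 2) = J x + f0 * (x⁻¹ - 1) := by
      have hpt : ∀ s : ℝ, f s / s ^ 2 = G s + f0 * (s ^ 2)⁻¹ := by
        intro s
        rw [hGdef]
        by_cases hs : s = 0
        · simp [hs]
        · field_simp
          ring
      calc (∫ s in x..(1:ℝ), f s / s ^ 2)
          = ∫ s in x..(1:ℝ), (G s + f0 * (s ^ 2)⁻¹) := by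
            apply intervalIntegral.integral_congr
            intro s _
            exact hpt s
        _ = (∫ s in x..(1:ℝ), G s) + ∫ s in x..(1:ℝ), f0 * (s ^ 2)⁻¹ := by
            apply intervalIntegral.integral_add (hGint x 1 hx one_pos)
            exact (aux_int_inv_sq hx one_pos).const_mul f0
        _ = J x + f0 * (x⁻¹ - 1) := by
            rw [intervalIntegral.integral_const_mul, aux_intval_inv_sq hx one_pos]
            simp [hJdef]
    have hkey := key x hx
    rw [e1, e2] at hkey
    have hxinv : x * x⁻¹ = 1 := mul_inv_cancel₀ hx.ne'
    linear_combination (-(ε * x)) * hkey + (x * J x + f0 * (x * x⁻¹) - f0 * x) * hε2 + f0 * hxinv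
  -- core limit: x * J x → 0
  have h2 : Tendsto (fun x => x * J x) (𝓝[>] (0:ℝ)) (𝓝 0) := by
    rw [Metric.tendsto_nhdsWithin_nhds]
    rw [Metric.tendsto_nhdsWithin_nhds] at hf0
    intro η hη
    obtain ⟨δ₁, hδ₁pos, hδ₁⟩ := hf0 (η / 3) (by positivity)
    set δ₂ : ℝ := min (δ₁ / 2) (1 / 2) with hδ₂def
    have hδ₂pos : 0 < δ₂ := lt_min (by linarith) (by norm_num)
    set Jc : ℝ := ∫ s in δ₂..(1:ℝ), G s with hJcdef
    refine ⟨min δ₂ ((η / 3) / (|Jc| + 1)), lt_min hδ₂pos (by positivity), ?_⟩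
    intro ρ hρ hdist
    have hρpos : 0 < ρ := hρ
    rw [Real.dist_eq, sub_zero, abs_of_pos hρpos] at hdist
    have hρδ : ρ < δ₂ := lt_of_lt_of_le hdist (min_le_left _ _)
    have hJcpos : (0:ℝ) < |Jc| + 1 := by positivity
    have hρJc : ρ * (|Jc| + 1) < η / 3 := by
      have h := lt_of_lt_of_le hdist (min_le_right _ _)
      calc ρ * (|Jc| + 1) < ((η / 3) / (|Jc| + 1)) * (|Jc| + 1) :=
            mul_lt_mul_of_pos_right h hJcpos
        _ = η / 3 := div_mul_cancel₀ _ hJcpos.ne'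
    have hsplit : J ρ = (∫ s in ρ..δ₂, G s) + Jc :=
      (intervalIntegral.integral_add_adjacent_intervals
        (hGint ρ δ₂ hρpos hδ₂pos) (hGint δ₂ 1 hδ₂pos one_pos)).symm
    -- bound the first piece
    have hle : ∀ t ∈ Set.uIoc ρ δ₂, ‖G t‖ ≤ (η / 3) * (t ^ 2)⁻¹ := by
      intro t ht
      rw [uIoc_of_le hρδ.le] at ht
      have htpos : 0 < t := hρpos.trans ht.1
      have htδ₁ : dist (f t) f0 < η / 3 := by
        apply hδ₁ (mem_Ioi.2 htpos)
        rw [Real.dist_eq, sub_zero, abs_of_pos htpos]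
        calc t ≤ δ₂ := ht.2
          _ ≤ δ₁ / 2 := min_le_left _ _
          _ < δ₁ := by linarith
      rw [Real.dist_eq] at htδ₁
      have habs : ‖G t‖ = |f t - f0| * (t ^ 2)⁻¹ := by
        rw [hGdef, Real.norm_eq_abs, abs_div, abs_of_pos (pow_pos htpos 2), div_eq_mul_inv]
      rw [habs]
      exact mul_le_mul_of_nonneg_right htδ₁.le (by positivity)
    have hae : ∀ᵐ t ∂(MeasureTheory.volume.restrict (Set.uIoc ρ δ₂)), ‖G t‖ ≤ (η / 3) * (t ^ 2)⁻¹ :=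
      MeasureTheory.ae_restrict_of_forall_mem measurableSet_uIoc hle
    have hb1 : |∫ s in ρ..δ₂, G s| ≤ (η / 3) * (ρ⁻¹ - δ₂⁻¹) := by
      have hbdd := intervalIntegral.norm_integral_le_of_norm_le hρδ.le
        (MeasureTheory.ae_of_all _ (fun t ht => hle t (by rw [uIoc_of_le hρδ.le]; exact ht)))
        ((aux_int_inv_sq hρpos hδ₂pos).const_mul (η / 3))
      rw [intervalIntegral.integral_const_mul, aux_intval_inv_sq hρpos hδ₂pos] at hbdd
      have hmono : δ₂⁻¹ ≤ ρ⁻¹ := by gcongr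
      rw [Real.norm_eq_abs] at hbdd
      exact hbdd
    have hρinv : ρ * ρ⁻¹ = 1 := mul_inv_cancel₀ hρpos.ne'
    have hδ₂invnn : (0:ℝ) ≤ δ₂⁻¹ := by positivity
    have hJabs : |J ρ| ≤ |∫ s in ρ..δ₂, G s| + |Jc| := by
      rw [hsplit]; exact abs_add_le _ _
    calc dist (ρ * J ρ) 0 = ρ * |J ρ| := by
          rw [Real.dist_eq, sub_zero, abs_mul, abs_of_pos hρpos]
      _ ≤ ρ * ((η / 3) * (ρ⁻¹ - δ₂⁻¹) + |Jc|) := by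
          apply mul_le_mul_of_nonneg_left _ hρpos.le
          exact hJabs.trans (by linarith)
      _ < η := by
          have hexp : ρ * ((η / 3) * (ρ⁻¹ - δ₂⁻¹) + |Jc|)
              = η / 3 - (η / 3) * (ρ * δ₂⁻¹) + ρ * |Jc| := by
            linear_combination (η / 3) * hρinv
          have h0 : (0:ℝ) ≤ (η / 3) * (ρ * δ₂⁻¹) := by positivity
          have h1 : ρ * (|Jc| + 1) = ρ * |Jc| + ρ := by ring
          linarith
  -- combine
  have h1 : Tendsto (fun x : ℝ => ε * x * a 1) (𝓝[>] (0:ℝ)) (𝓝 0) := by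
    have c1 : Continuous fun x : ℝ => ε * x * a 1 := by continuity
    have : Tendsto (fun x : ℝ => ε * x * a 1) (𝓝 (0:ℝ)) (𝓝 (ε * 0 * a 1)) := c1.tendsto 0
    simpa using this.mono_left nhdsWithin_le_nhds
  have h3 : Tendsto (fun x : ℝ => f0 * (1 - x)) (𝓝[>] (0:ℝ)) (𝓝 f0) := by
    have c3 : Continuous fun x : ℝ => f0 * (1 - x) := by continuity
    have : Tendsto (fun x : ℝ => f0 * (1 - x)) (𝓝 (0:ℝ)) (𝓝 (f0 * (1 - 0))) := c3.tendsto 0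
    simpa using this.mono_left nhdsWithin_le_nhds
  have hsum := (h1.add h2).add h3
  rw [add_zero, zero_add] at hsum
  apply hsum.congr'
  filter_upwards [self_mem_nhdsWithin] with x hx
  exact (rep x hx).symm
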